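/- Fix a pmf ρ on X0 and a channel Γ : X1 → (pmf on Y). The feasible set of the optimization problem of Section III-B, namely the set of (ρ,Γ)-admissible pmfs Q on X0 × X1 × X2 × Y satisfying the information constraint Φ(Q) = I_Q(X0;X2) − I_Q(X1;Y|X0,X2) ≤ 0, is a convex subset of the space of functions X0 × X1 × X2 × Y → ℝ; consequently, for any payoff function w : X0 × X1 × X2 → ℝ, maximizing the expected payoff E_Q[w] = ∑_{x0,x1,x2,y} Q(x0,x1,x2,y)·w(x0,x1,x2) over this set is a convex optimization problem (linear objective over a convex set). -/

import Mathlib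

open scoped BigOperators

/-- A probability mass function on a finite set. -/
def IsPmf {S : Type*} [Fintype S] (q : S → ℝ) : Prop :=
  (∀ s, 0 ≤ q s) ∧ ∑ s, q s = 1

section Defs

variable {X0 X1 X2 Y : Type*} [Fintype X0] [Fintype X1] [Fintype X2] [Fintype Y]

/-- Marginal on `X0`. -/
noncomputable def margX0 (Q : X0 × X1 × X2 × Y → ℝ) (x0 : X0) : ℝ :=
  ∑ x1, ∑ x2, ∑ y, Q (x0, x1, x2, y)

/-- Marginal on `X2`. -/
noncomputable def margX2 (Q : X0 × X1 × X2 × Y → ℝ) (x2 : X2) : ℝ :=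
  ∑ x0, ∑ x1, ∑ y, Q (x0, x1, x2, y)

/-- Marginal on `(X0, X2)`. -/
noncomputable def margX0X2 (Q : X0 × X1 × X2 × Y → ℝ) (x0 : X0) (x2 : X2) : ℝ :=
  ∑ x1, ∑ y, Q (x0, x1, x2, y)

/-- Marginal on `(X0, X2, Y)`. -/
noncomputable def margX0X2Y (Q : X0 × X1 × X2 × Y → ℝ) (x0 : X0) (x2 : X2) (y : Y) : ℝ :=
  ∑ x1, Q (x0, x1, x2, y)

/-- Marginal on `(X0, X1, X2)`. -/
noncomputable def margX0X1X2 (Q : X0 × X1 × X2 × Y → ℝ) (x0 : X0) (x1 : X1) (x2 : X2) : ℝ :=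
  ∑ y, Q (x0, x1, x2, y)

/-- Entropy `H_Q(X0)` (natural log, `0 log 0 = 0` holds by `Real.log 0 = 0`). -/
noncomputable def H_X0 (Q : X0 × X1 × X2 × Y → ℝ) : ℝ :=
  -∑ x0, margX0 Q x0 * Real.log (margX0 Q x0)

/-- Entropy `H_Q(X2)`. -/
noncomputable def H_X2 (Q : X0 × X1 × X2 × Y → ℝ) : ℝ :=
  -∑ x2, margX2 Q x2 * Real.log (margX2 Q x2)

/-- Joint entropy `H_Q(X0, X2)`. -/
noncomputable def H_X0X2 (Q : X0 × X1 × X2 × Y → ℝ) : ℝ :=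
  -∑ x0, ∑ x2, margX0X2 Q x0 x2 * Real.log (margX0X2 Q x0 x2)

/-- Conditional entropy `H_Q(Y, X0 | X2)` (terms with zero mass contribute `0`
since `0 * log _ = 0` and `Real.log 0 = 0`, `0 / 0 = 0`). -/
noncomputable def HcondYX0_X2 (Q : X0 × X1 × X2 × Y → ℝ) : ℝ :=
  -∑ x0, ∑ x2, ∑ y,
    margX0X2Y Q x0 x2 y * Real.log (margX0X2Y Q x0 x2 y / margX2 Q x2)

/-- Conditional entropy `H_Q(Y | X0, X2)`. -/
noncomputable def HcondY_X0X2 (Q : X0 × X1 × X2 × Y → ℝ) : ℝ :=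
  -∑ x0, ∑ x2, ∑ y,
    margX0X2Y Q x0 x2 y * Real.log (margX0X2Y Q x0 x2 y / margX0X2 Q x0 x2)

/-- Conditional entropy `H_Q(Y | X0, X1, X2)`. -/
noncomputable def HcondY_X0X1X2 (Q : X0 × X1 × X2 × Y → ℝ) : ℝ :=
  -∑ x0, ∑ x1, ∑ x2, ∑ y,
    Q (x0, x1, x2, y) * Real.log (Q (x0, x1, x2, y) / margX0X1X2 Q x0 x1 x2)

/-- Mutual information `I_Q(X0; X2) = H(X0) + H(X2) - H(X0, X2)`. -/
noncomputable def mutI_X0X2 (Q : X0 × X1 × X2 × Y → ℝ) : ℝ :=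
  H_X0 Q + H_X2 Q - H_X0X2 Q

/-- Conditional mutual information `I_Q(X1; Y | X0, X2)`. -/
noncomputable def condMutI_X1Y_X0X2 (Q : X0 × X1 × X2 × Y → ℝ) : ℝ :=
  HcondY_X0X2 Q - HcondY_X0X1X2 Q

/-- `Φ(Q) = I_Q(X0; X2) - I_Q(X1; Y | X0, X2)`. -/
noncomputable def Phi (Q : X0 × X1 × X2 × Y → ℝ) : ℝ :=
  mutI_X0X2 Q - condMutI_X1Y_X0X2 Q

/-- A channel `Γ : X1 → Δ(Y)`. -/
def IsChannel (Γ : X1 → Y → ℝ) : Prop :=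
  ∀ x1, (∀ y, 0 ≤ Γ x1 y) ∧ ∑ y, Γ x1 y = 1

/-- `(ρ, Γ)`-admissibility: `Q` is a pmf whose `X0`-marginal is `ρ` and which
factorizes through the channel `Γ`. -/
def IsAdmissible (ρ : X0 → ℝ) (Γ : X1 → Y → ℝ) (Q : X0 × X1 × X2 × Y → ℝ) : Prop :=
  IsPmf Q ∧ (∀ x0, margX0 Q x0 = ρ x0) ∧
    ∀ x0 x1 x2 y, Q (x0, x1, x2, y) = Γ x1 y * margX0X1X2 Q x0 x1 x2

end Defs

lemma mul_log_div_eq' (a b : ℝ) (ha : 0 ≤ a) (hab : a ≤ b) :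
    a * Real.log (a / b) = a * Real.log a - a * Real.log b := by
  rcases eq_or_lt_of_le ha with h | h
  · simp [← h]
  · have hb : 0 < b := lt_of_lt_of_le h hab
    rw [Real.log_div (ne_of_gt h) (ne_of_gt hb)]; ring

lemma logsum_two (a1 b1 a2 b2 t s : ℝ) (ha1 : 0 ≤ a1) (hb1 : a1 ≤ b1)
    (ha2 : 0 ≤ a2) (hb2 : a2 ≤ b2) (ht : 0 ≤ t) (hs : 0 ≤ s) (hts : t + s = 1) :
    (t * a1 + s * a2) * Real.log ((t * a1 + s * a2) / (t * b1 + s * b2)) ≤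
      t * (a1 * Real.log (a1 / b1)) + s * (a2 * Real.log (a2 / b2)) := by
  rcases eq_or_lt_of_le ht with h | htpos
  · have : s = 1 := by linarith
    simp [← h, this]
  rcases eq_or_lt_of_le hs with h | hspos
  · have : t = 1 := by linarith
    simp [← h, this]
  rcases eq_or_lt_of_le (le_trans ha1 hb1) with h | hb1pos
  · have ha1' : a1 = 0 := le_antisymm (h ▸ hb1) ha1
    rcases eq_or_lt_of_le (le_trans ha2 hb2) with h2 | hb2pos
    · have ha2' : a2 = 0 := le_antisymm (h2 ▸ hb2) ha2
      simp [ha1', ha2']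
    · rw [ha1', ← h]
      have key : s * a2 / (t * 0 + s * b2) = a2 / b2 := by
        rw [mul_zero, zero_add, mul_div_mul_left _ _ (ne_of_gt hspos)]
      simp only [mul_zero, zero_add] at key ⊢
      rw [key]
      simp [mul_assoc]
  rcases eq_or_lt_of_le (le_trans ha2 hb2) with h2 | hb2pos
  · have ha2' : a2 = 0 := le_antisymm (h2 ▸ hb2) ha2
    rw [ha2', ← h2]
    have key : t * a1 / (t * b1 + s * 0) = a1 / b1 := by
      rw [mul_zero, add_zero, mul_div_mul_left _ _ (ne_of_gt htpos)]
    simp only [mul_zero, add_zero] at key ⊢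
    rw [key]
    simp [mul_assoc]
  -- main case: b1, b2 > 0
  set c := t * b1 + s * b2 with hc
  have hcpos : 0 < c := by positivity
  have hα : 0 ≤ t * b1 / c := by positivity
  have hβ : 0 ≤ s * b2 / c := by positivity
  have hαβ : t * b1 / c + s * b2 / c = 1 := by field_simp; exact hc.symm
  have hx : a1 / b1 ∈ Set.Ici (0:ℝ) := Set.mem_Ici.mpr (by positivity)
  have hy : a2 / b2 ∈ Set.Ici (0:ℝ) := Set.mem_Ici.mpr (by positivity)
  have hcvx := Real.convexOn_mul_log.2 hx hy hα hβ hαβ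
  have harg : (t * b1 / c) • (a1 / b1) + (s * b2 / c) • (a2 / b2)
      = (t * a1 + s * a2) / c := by
    simp only [smul_eq_mul]
    field_simp
  rw [harg] at hcvx
  have := mul_le_mul_of_nonneg_left hcvx (le_of_lt hcpos)
  calc (t * a1 + s * a2) * Real.log ((t * a1 + s * a2) / c)
      = c * ((t * a1 + s * a2) / c * Real.log ((t * a1 + s * a2) / c)) := by
        field_simp
    _ ≤ c * ((t * b1 / c) * (a1 / b1 * Real.log (a1 / b1))
          + (s * b2 / c) * (a2 / b2 * Real.log (a2 / b2))) := by
        simpa [smul_eq_mul] using this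
    _ = t * (a1 * Real.log (a1 / b1)) + s * (a2 * Real.log (a2 / b2)) := by
        field_simp

section Aux

variable {X0 X1 X2 Y : Type*} [Fintype X0] [Fintype X1] [Fintype X2] [Fintype Y]

lemma sum_y_m3 (Q : X0 × X1 × X2 × Y → ℝ) (x0 : X0) (x2 : X2) :
    ∑ y, margX0X2Y Q x0 x2 y = margX0X2 Q x0 x2 := by
  unfold margX0X2Y margX0X2
  exact Finset.sum_comm

lemma margX2_eq_sum (Q : X0 × X1 × X2 × Y → ℝ) (x2 : X2) :
    margX2 Q x2 = ∑ x0, ∑ y, margX0X2Y Q x0 x2 y := by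
  unfold margX2 margX0X2Y
  exact Finset.sum_congr rfl fun x0 _ => Finset.sum_comm

lemma m3_nonneg (Q : X0 × X1 × X2 × Y → ℝ) (h : ∀ p, 0 ≤ Q p) (x0 : X0) (x2 : X2) (y : Y) :
    0 ≤ margX0X2Y Q x0 x2 y :=
  Finset.sum_nonneg fun _ _ => h _

lemma m3_le_m2 (Q : X0 × X1 × X2 × Y → ℝ) (h : ∀ p, 0 ≤ Q p) (x0 : X0) (x2 : X2) (y : Y) :
    margX0X2Y Q x0 x2 y ≤ margX0X2 Q x0 x2 := by
  rw [← sum_y_m3]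
  exact Finset.single_le_sum (fun y' _ => m3_nonneg Q h x0 x2 y') (Finset.mem_univ y)

lemma m3_le_m1 (Q : X0 × X1 × X2 × Y → ℝ) (h : ∀ p, 0 ≤ Q p) (x0 : X0) (x2 : X2) (y : Y) :
    margX0X2Y Q x0 x2 y ≤ margX2 Q x2 := by
  rw [margX2_eq_sum]
  calc margX0X2Y Q x0 x2 y ≤ ∑ y', margX0X2Y Q x0 x2 y' :=
        Finset.single_le_sum (fun y' _ => m3_nonneg Q h x0 x2 y') (Finset.mem_univ y)
    _ ≤ ∑ x0', ∑ y', margX0X2Y Q x0' x2 y' :=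
        Finset.single_le_sum
          (fun x0' _ => Finset.sum_nonneg fun y' _ => m3_nonneg Q h x0' x2 y')
          (Finset.mem_univ x0)

lemma hcond_split2 (Q : X0 × X1 × X2 × Y → ℝ) (h : ∀ p, 0 ≤ Q p) :
    ∑ x0, ∑ x2, ∑ y,
        margX0X2Y Q x0 x2 y * Real.log (margX0X2Y Q x0 x2 y / margX0X2 Q x0 x2)
      = (∑ x0, ∑ x2, ∑ y, margX0X2Y Q x0 x2 y * Real.log (margX0X2Y Q x0 x2 y))
        - ∑ x0, ∑ x2, margX0X2 Q x0 x2 * Real.log (margX0X2 Q x0 x2) := by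
  rw [← Finset.sum_sub_distrib]
  refine Finset.sum_congr rfl fun x0 _ => ?_
  rw [← Finset.sum_sub_distrib]
  refine Finset.sum_congr rfl fun x2 _ => ?_
  have : ∀ y, margX0X2Y Q x0 x2 y * Real.log (margX0X2Y Q x0 x2 y / margX0X2 Q x0 x2)
      = margX0X2Y Q x0 x2 y * Real.log (margX0X2Y Q x0 x2 y)
        - margX0X2Y Q x0 x2 y * Real.log (margX0X2 Q x0 x2) :=
    fun y => mul_log_div_eq' _ _ (m3_nonneg Q h x0 x2 y) (m3_le_m2 Q h x0 x2 y)
  rw [Finset.sum_congr rfl fun y _ => this y, Finset.sum_sub_distrib,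
    ← Finset.sum_mul, sum_y_m3]

lemma hcond_split1 (Q : X0 × X1 × X2 × Y → ℝ) (h : ∀ p, 0 ≤ Q p) :
    ∑ x0, ∑ x2, ∑ y,
        margX0X2Y Q x0 x2 y * Real.log (margX0X2Y Q x0 x2 y / margX2 Q x2)
      = (∑ x0, ∑ x2, ∑ y, margX0X2Y Q x0 x2 y * Real.log (margX0X2Y Q x0 x2 y))
        - ∑ x2, margX2 Q x2 * Real.log (margX2 Q x2) := by
  have hsplit : ∀ x0 x2 y,
      margX0X2Y Q x0 x2 y * Real.log (margX0X2Y Q x0 x2 y / margX2 Q x2)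
        = margX0X2Y Q x0 x2 y * Real.log (margX0X2Y Q x0 x2 y)
          - margX0X2Y Q x0 x2 y * Real.log (margX2 Q x2) :=
    fun x0 x2 y => mul_log_div_eq' _ _ (m3_nonneg Q h x0 x2 y) (m3_le_m1 Q h x0 x2 y)
  have h2 : ∑ x0, ∑ x2, ∑ y, margX0X2Y Q x0 x2 y * Real.log (margX2 Q x2)
      = ∑ x2, margX2 Q x2 * Real.log (margX2 Q x2) := by
    rw [Finset.sum_comm]
    refine Finset.sum_congr rfl fun x2 _ => ?_
    rw [margX2_eq_sum]
    rw [Finset.sum_mul]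
    exact Finset.sum_congr rfl fun x0 _ => (Finset.sum_mul _ _ _).symm
  calc ∑ x0, ∑ x2, ∑ y,
        margX0X2Y Q x0 x2 y * Real.log (margX0X2Y Q x0 x2 y / margX2 Q x2)
      = ∑ x0, ∑ x2, ∑ y, (margX0X2Y Q x0 x2 y * Real.log (margX0X2Y Q x0 x2 y)
          - margX0X2Y Q x0 x2 y * Real.log (margX2 Q x2)) := by
        exact Finset.sum_congr rfl fun x0 _ => Finset.sum_congr rfl fun x2 _ =>
          Finset.sum_congr rfl fun y _ => hsplit x0 x2 y
    _ = (∑ x0, ∑ x2, ∑ y, margX0X2Y Q x0 x2 y * Real.log (margX0X2Y Q x0 x2 y))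
          - ∑ x0, ∑ x2, ∑ y, margX0X2Y Q x0 x2 y * Real.log (margX2 Q x2) := by
        simp [Finset.sum_sub_distrib]
    _ = _ := by rw [h2]

lemma hcondY_X0X1X2_eq (Q : X0 × X1 × X2 × Y → ℝ) (Γ : X1 → Y → ℝ)
    (hfac : ∀ x0 x1 x2 y, Q (x0, x1, x2, y) = Γ x1 y * margX0X1X2 Q x0 x1 x2) :
    HcondY_X0X1X2 Q
      = -∑ x0, ∑ x1, ∑ x2, ∑ y, Q (x0, x1, x2, y) * Real.log (Γ x1 y) := by
  unfold HcondY_X0X1X2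
  congr 1
  refine Finset.sum_congr rfl fun x0 _ => Finset.sum_congr rfl fun x1 _ =>
    Finset.sum_congr rfl fun x2 _ => Finset.sum_congr rfl fun y _ => ?_
  by_cases hP : margX0X1X2 Q x0 x1 x2 = 0
  · rw [hfac x0 x1 x2 y, hP]
    simp
  · rw [hfac x0 x1 x2 y, mul_div_cancel_right₀ _ hP]

/-- Representation of `Phi` on the admissible set. -/
lemma phi_repr {ρ : X0 → ℝ} {Γ : X1 → Y → ℝ} {Q : X0 × X1 × X2 × Y → ℝ}
    (hQ : IsAdmissible ρ Γ Q) :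
    Phi Q = (-∑ x0, ρ x0 * Real.log (ρ x0))
      + (∑ x0, ∑ x2, ∑ y,
          margX0X2Y Q x0 x2 y * Real.log (margX0X2Y Q x0 x2 y / margX2 Q x2))
      - ∑ x0, ∑ x1, ∑ x2, ∑ y, Q (x0, x1, x2, y) * Real.log (Γ x1 y) := by
  obtain ⟨⟨hpos, _⟩, hmarg, hfac⟩ := hQ
  have hH0 : H_X0 Q = -∑ x0, ρ x0 * Real.log (ρ x0) := by
    unfold H_X0
    congr 1
    exact Finset.sum_congr rfl fun x0 _ => by rw [hmarg x0]
  unfold Phi mutI_X0X2 condMutI_X1Y_X0X2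
  rw [hcondY_X0X1X2_eq Q Γ hfac, hH0]
  unfold HcondY_X0X2 H_X2 H_X0X2
  rw [hcond_split1 Q hpos]
  have := hcond_split2 Q hpos
  rw [show (∑ x0, ∑ x2, ∑ y,
      margX0X2Y Q x0 x2 y * Real.log (margX0X2Y Q x0 x2 y / margX0X2 Q x0 x2))
      = (∑ x0, ∑ x2, ∑ y, margX0X2Y Q x0 x2 y * Real.log (margX0X2Y Q x0 x2 y))
        - ∑ x0, ∑ x2, margX0X2 Q x0 x2 * Real.log (margX0X2 Q x0 x2) from this]
  ring

lemma marg_mix3 (Q1 Q2 : X0 × X1 × X2 × Y → ℝ) (a b : ℝ) (x0 : X0) (x2 : X2) (y : Y) :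
    margX0X2Y (a • Q1 + b • Q2) x0 x2 y
      = a * margX0X2Y Q1 x0 x2 y + b * margX0X2Y Q2 x0 x2 y := by
  unfold margX0X2Y
  simp [Finset.sum_add_distrib, Finset.mul_sum]

lemma marg_mix1 (Q1 Q2 : X0 × X1 × X2 × Y → ℝ) (a b : ℝ) (x2 : X2) :
    margX2 (a • Q1 + b • Q2) x2 = a * margX2 Q1 x2 + b * margX2 Q2 x2 := by
  unfold margX2
  simp [Finset.sum_add_distrib, Finset.mul_sum]

end Aux

/-- the feasible set of the optimization problem of Section III-B,
i.e. the set of `(ρ, Γ)`-admissible pmfs satisfying the information constraint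
`Φ(Q) ≤ 0`, is convex, and the expected payoff `E_Q[w]` is a linear function of `Q`;
hence maximizing `E_Q[w]` over this set is a convex optimization problem. -/
theorem feasible_set_convex_and_objective_linear
    {X0 X1 X2 Y : Type*} [Fintype X0] [Fintype X1] [Fintype X2] [Fintype Y]
    (ρ : X0 → ℝ) (hρ : IsPmf ρ) (Γ : X1 → Y → ℝ) (hΓ : IsChannel Γ)
    (w : X0 → X1 → X2 → ℝ) :
    Convex ℝ {Q : X0 × X1 × X2 × Y → ℝ | IsAdmissible ρ Γ Q ∧ Phi Q ≤ 0} ∧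
    IsLinearMap ℝ (fun Q : X0 × X1 × X2 × Y → ℝ =>
      ∑ x0, ∑ x1, ∑ x2, ∑ y, Q (x0, x1, x2, y) * w x0 x1 x2) := by
  constructor
  · rintro Q1 ⟨hQ1, hphi1⟩ Q2 ⟨hQ2, hphi2⟩ a b ha hb hab
    obtain ⟨⟨hpos1, hsum1⟩, hmarg1, hfac1⟩ := id hQ1
    obtain ⟨⟨hpos2, hsum2⟩, hmarg2, hfac2⟩ := id hQ2
    set Qm := a • Q1 + b • Q2 with hQm
    have hQmapp : ∀ p, Qm p = a * Q1 p + b * Q2 p := fun p => by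
      simp [hQm, smul_eq_mul]
    have hposm : ∀ p, 0 ≤ Qm p := fun p => by
      rw [hQmapp]
      have := hpos1 p; have := hpos2 p
      positivity
    have hfacm : ∀ x0 x1 x2 y,
        Qm (x0, x1, x2, y) = Γ x1 y * margX0X1X2 Qm x0 x1 x2 := by
      intro x0 x1 x2 y
      have hPm : margX0X1X2 Qm x0 x1 x2
          = a * margX0X1X2 Q1 x0 x1 x2 + b * margX0X1X2 Q2 x0 x1 x2 := by
        unfold margX0X1X2
        simp [hQm, Finset.sum_add_distrib, Finset.mul_sum]
      rw [hQmapp, hfac1 x0 x1 x2 y, hfac2 x0 x1 x2 y, hPm]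
      ring
    have hAdm : IsAdmissible ρ Γ Qm := by
      refine ⟨⟨hposm, ?_⟩, ?_, hfacm⟩
      · have : ∑ p, Qm p = a * ∑ p, Q1 p + b * ∑ p, Q2 p := by
          simp [hQmapp, Finset.sum_add_distrib, Finset.mul_sum]
        rw [this, hsum1, hsum2]
        linarith
      · intro x0
        have : margX0 Qm x0 = a * margX0 Q1 x0 + b * margX0 Q2 x0 := by
          unfold margX0
          simp [hQm, Finset.sum_add_distrib, Finset.mul_sum]
        rw [this, hmarg1 x0, hmarg2 x0, ← add_mul, hab, one_mul]
    refine ⟨hAdm, ?_⟩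
    have hGm : (∑ x0, ∑ x2, ∑ y,
          margX0X2Y Qm x0 x2 y * Real.log (margX0X2Y Qm x0 x2 y / margX2 Qm x2))
        ≤ a * (∑ x0, ∑ x2, ∑ y,
            margX0X2Y Q1 x0 x2 y * Real.log (margX0X2Y Q1 x0 x2 y / margX2 Q1 x2))
          + b * (∑ x0, ∑ x2, ∑ y,
            margX0X2Y Q2 x0 x2 y * Real.log (margX0X2Y Q2 x0 x2 y / margX2 Q2 x2)) := by
      rw [Finset.mul_sum, Finset.mul_sum, ← Finset.sum_add_distrib]
      refine Finset.sum_le_sum fun x0 _ => ?_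
      rw [Finset.mul_sum, Finset.mul_sum, ← Finset.sum_add_distrib]
      refine Finset.sum_le_sum fun x2 _ => ?_
      rw [Finset.mul_sum, Finset.mul_sum, ← Finset.sum_add_distrib]
      refine Finset.sum_le_sum fun y _ => ?_
      rw [marg_mix3, marg_mix1]
      exact logsum_two _ _ _ _ a b (m3_nonneg Q1 hpos1 x0 x2 y)
        (m3_le_m1 Q1 hpos1 x0 x2 y) (m3_nonneg Q2 hpos2 x0 x2 y)
        (m3_le_m1 Q2 hpos2 x0 x2 y) ha hb hab
    have hLm : (∑ x0, ∑ x1, ∑ x2, ∑ y, Qm (x0, x1, x2, y) * Real.log (Γ x1 y))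
        = a * (∑ x0, ∑ x1, ∑ x2, ∑ y, Q1 (x0, x1, x2, y) * Real.log (Γ x1 y))
          + b * (∑ x0, ∑ x1, ∑ x2, ∑ y, Q2 (x0, x1, x2, y) * Real.log (Γ x1 y)) := by
      simp only [hQmapp]
      simp [Finset.sum_add_distrib, Finset.mul_sum, add_mul, mul_assoc]
    have h1 := phi_repr (X2 := X2) hQ1
    have h2 := phi_repr (X2 := X2) hQ2
    have hm := phi_repr (X2 := X2) hAdm
    have key : Phi Qm ≤ a * Phi Q1 + b * Phi Q2 := by
      rw [hm, h1, h2, hLm]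
      set C := -∑ x0, ρ x0 * Real.log (ρ x0) with hC
      set G1 := ∑ x0, ∑ x2, ∑ y,
        margX0X2Y Q1 x0 x2 y * Real.log (margX0X2Y Q1 x0 x2 y / margX2 Q1 x2) with hG1
      set G2 := ∑ x0, ∑ x2, ∑ y,
        margX0X2Y Q2 x0 x2 y * Real.log (margX0X2Y Q2 x0 x2 y / margX2 Q2 x2) with hG2
      set L1 := ∑ x0, ∑ x1, ∑ x2, ∑ y, Q1 (x0, x1, x2, y) * Real.log (Γ x1 y) with hL1
      set L2 := ∑ x0, ∑ x1, ∑ x2, ∑ y, Q2 (x0, x1, x2, y) * Real.log (Γ x1 y) with hL2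
      have hex : a * (C + G1 - L1) + b * (C + G2 - L2)
          = (a + b) * C + (a * G1 + b * G2) - (a * L1 + b * L2) := by ring
      rw [hex, hab, one_mul]
      linarith [hGm]
    have t1 : a * Phi Q1 ≤ a * 0 := mul_le_mul_of_nonneg_left hphi1 ha
    have t2 : b * Phi Q2 ≤ b * 0 := mul_le_mul_of_nonneg_left hphi2 hb
    simp only [mul_zero] at t1 t2
    linarith [key]
  · constructor
    · intro Q1 Q2
      simp [add_mul, Finset.sum_add_distrib]
    · intro c Q
      simp [Finset.mul_sum, mul_assoc]
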